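/- Let C be a (k,r,h) data-local maximally recoverable code with ℓ = k/r local groups, with local group supports S_1, ..., S_ℓ. For any subset U of {1,...,n}, let b(U) = #{i : S_i ⊆ U}. Then ρ(U) = min(|U| - b(U), k). -/

import Mathlib

set_option maxHeartbeats 1000000


open Finset

/-- Coordinate index set of a `(k,r,h)` data-local code with `ℓ = k/r` local groups
(see stmt 3). -/
abbrev DLIdx (ℓ r h : ℕ) : Type := (Fin ℓ × Fin r) ⊕ (Fin ℓ ⊕ Fin h)

/-- The support `S_i` of the `i`-th local group. -/
def dlGroup (ℓ r h : ℕ) (i : Fin ℓ) : Finset (DLIdx ℓ r h) :=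
  insert (Sum.inr (Sum.inl i))
    ((Finset.univ : Finset (Fin r)).image fun j => Sum.inl (i, j))

/-- `ρ(U)`: the dimension of the projection of the code `C` onto the coordinates in `U`. -/
noncomputable def dlRho (ℓ r h : ℕ) (F : Type) [Field F]
    (C : Submodule F (DLIdx ℓ r h → F)) (U : Finset (DLIdx ℓ r h)) : ℕ :=
  Module.finrank F (C.map (LinearMap.funLeft F F (Subtype.val : ↥U → DLIdx ℓ r h)))

namespace DLAux

variable {ℓ r h : ℕ}

lemma mem_dlGroup {i : Fin ℓ} {x : DLIdx ℓ r h} :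
    x ∈ dlGroup ℓ r h i ↔ x = Sum.inr (Sum.inl i) ∨ ∃ j : Fin r, x = Sum.inl (i, j) := by
  simp [dlGroup, eq_comm]

lemma card_dlGroup (i : Fin ℓ) : (dlGroup ℓ r h i).card = r + 1 := by
  rw [dlGroup, Finset.card_insert_of_notMem (by simp),
    Finset.card_image_of_injective _ (fun a b hab => by simpa using hab)]
  simp

lemma dlGroup_disjoint {i j : Fin ℓ} (hij : i ≠ j) :
    Disjoint (dlGroup ℓ r h i) (dlGroup ℓ r h j) := by
  rw [Finset.disjoint_left]
  intro x hxi hxj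
  rw [mem_dlGroup] at hxi hxj
  rcases hxi with h1 | ⟨j1, h1⟩ <;> rcases hxj with h2 | ⟨j2, h2⟩ <;>
    subst h1 <;> simp_all

variable {F : Type} [Field F] (C : Submodule F (DLIdx ℓ r h → F))

lemma rho_mono {T U : Finset (DLIdx ℓ r h)} (hTU : T ⊆ U) :
    dlRho ℓ r h F C T ≤ dlRho ℓ r h F C U := by
  have hval : (Subtype.val : ↥T → DLIdx ℓ r h) =
      (Subtype.val : ↥U → DLIdx ℓ r h) ∘ (fun t => ⟨t.1, hTU t.2⟩) := rfl
  unfold dlRho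
  rw [hval, LinearMap.funLeft_comp, Submodule.map_comp]
  exact Submodule.finrank_map_le _ _

end DLAux

/-- for a `(k,r,h)` data-local MRC with `ℓ = k/r` local groups, and any
`U ⊆ [n]`, letting `b(U) = #{i : S_i ⊆ U}`, one has `ρ(U) = min(|U| - b(U), k)`. -/
theorem stmt_6 (ℓ r h : ℕ) (hr : 0 < r) (hℓ : 0 < ℓ)
    (F : Type) [Field F] [Fintype F] [DecidableEq F]
    (C : Submodule F (DLIdx ℓ r h → F))
    (hsys : ∀ x : Fin ℓ × Fin r → F, ∃! c : DLIdx ℓ r h → F,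
      c ∈ C ∧ ∀ p, c (Sum.inl p) = x p)
    (a : Fin ℓ → Fin r → F) (ha : ∀ i j, a i j ≠ 0)
    (hloc : ∀ c ∈ C, ∀ i : Fin ℓ,
      c (Sum.inr (Sum.inl i)) = ∑ j : Fin r, a i j * c (Sum.inl (i, j)))
    (hmrc : ∀ E : Finset (DLIdx ℓ r h), E.card = ℓ * r + h →
      (∀ i : Fin ℓ, (E ∩ dlGroup ℓ r h i).card = r) →
      Module.finrank F
          (C.map (LinearMap.funLeft F F (Subtype.val : ↥E → DLIdx ℓ r h))) = ℓ * r ∧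
      ∀ y ∈ C.map (LinearMap.funLeft F F (Subtype.val : ↥E → DLIdx ℓ r h)),
        y ≠ 0 → h + 1 ≤ hammingNorm y) :
    ∀ U : Finset (DLIdx ℓ r h),
      dlRho ℓ r h F C U =
        min (U.card - (Finset.univ.filter fun i : Fin ℓ => dlGroup ℓ r h i ⊆ U).card)
          (ℓ * r) := by
  classical
  -- dimension of C is ℓ * r
  have hdimC : Module.finrank F ↥C = ℓ * r := by
    have hbij : Function.Bijective
        ((LinearMap.funLeft F F (Sum.inl : Fin ℓ × Fin r → DLIdx ℓ r h)).comp C.subtype) := by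
      constructor
      · rintro ⟨c₁, hc₁⟩ ⟨c₂, hc₂⟩ hcc
        obtain ⟨c, -, hu⟩ := hsys (fun p => c₁ (Sum.inl p))
        have h1 := hu c₁ ⟨hc₁, fun p => rfl⟩
        have h2 := hu c₂ ⟨hc₂, fun p => (congrFun hcc p).symm⟩
        exact Subtype.ext (h1.trans h2.symm)
      · intro x
        obtain ⟨c, ⟨hc, hx⟩, -⟩ := hsys x
        exact ⟨⟨c, hc⟩, funext hx⟩
    have hfe : Module.finrank F ↥C = Module.finrank F (Fin ℓ × Fin r → F) :=
      LinearEquiv.finrank_eq (LinearEquiv.ofBijective _ hbij)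
    rw [hfe, Module.finrank_fintype_fun_eq_card]
    simp
  -- KEY LEMMA: if U meets every group in at most r points, ρ(U) = min |U| (ℓr)
  have keyA : ∀ T : Finset (DLIdx ℓ r h), (∀ i, (T ∩ dlGroup ℓ r h i).card ≤ r) →
      dlRho ℓ r h F C T = min T.card (ℓ * r) := by
    intro T hT
    have hGex : ∀ i : Fin ℓ, ∃ G : Finset (DLIdx ℓ r h),
        T ∩ dlGroup ℓ r h i ⊆ G ∧ G ⊆ dlGroup ℓ r h i ∧ G.card = r := fun i =>
      Finset.exists_subsuperset_card_eq Finset.inter_subset_right (hT i)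
        (by rw [DLAux.card_dlGroup]; omega)
    choose G hG1 hG2 hG3 using hGex
    set Eb : Finset (DLIdx ℓ r h) := Finset.univ.biUnion G with hEb
    set Eg : Finset (DLIdx ℓ r h) :=
      Finset.univ.image (fun g : Fin h => Sum.inr (Sum.inr g)) with hEg
    set E : Finset (DLIdx ℓ r h) := Eg ∪ Eb with hE
    have hdisjGG : ∀ i j : Fin ℓ, i ≠ j → Disjoint (G i) (G j) := fun i j hij =>
      Finset.disjoint_of_subset_left (hG2 i)
        (Finset.disjoint_of_subset_right (hG2 j) (DLAux.dlGroup_disjoint hij))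
    have hEbcard : Eb.card = ℓ * r := by
      rw [hEb, Finset.card_biUnion (fun i _ j _ hij => hdisjGG i j hij)]
      simp [hG3, mul_comm]
    have hEgG : ∀ i, Disjoint Eg (dlGroup ℓ r h i) := by
      intro i
      rw [Finset.disjoint_left]
      intro x hx hxg
      simp only [hEg, Finset.mem_image] at hx
      obtain ⟨g, -, rfl⟩ := hx
      rw [DLAux.mem_dlGroup] at hxg
      rcases hxg with h1 | ⟨j, h1⟩ <;> simp_all
    have hdisjgb : Disjoint Eg Eb := by
      rw [hEb, Finset.disjoint_biUnion_right]
      exact fun i _ => Finset.disjoint_of_subset_right (hG2 i) (hEgG i)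
    have hEcard : E.card = ℓ * r + h := by
      rw [hE, Finset.card_union_of_disjoint hdisjgb, hEbcard, hEg,
        Finset.card_image_of_injective _ (fun a b hab => by simpa using hab)]
      simp [add_comm]
    have hEG : ∀ i, E ∩ dlGroup ℓ r h i = G i := by
      intro i
      apply Finset.Subset.antisymm
      · intro x hx
        rw [Finset.mem_inter] at hx
        obtain ⟨hxE, hxg⟩ := hx
        rw [hE, Finset.mem_union] at hxE
        rcases hxE with hxE | hxE
        · exact absurd hxg (Finset.disjoint_left.mp (hEgG i) hxE)
        · rw [hEb, Finset.mem_biUnion] at hxE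
          obtain ⟨j, -, hxj⟩ := hxE
          rcases eq_or_ne i j with rfl | hij
          · exact hxj
          · exact absurd hxg
              (Finset.disjoint_left.mp (DLAux.dlGroup_disjoint (Ne.symm hij)) (hG2 j hxj))
      · intro x hx
        exact Finset.mem_inter.mpr
          ⟨Finset.mem_union_right _ (Finset.mem_biUnion.mpr ⟨i, Finset.mem_univ i, hx⟩),
            hG2 i hx⟩
    have hTE : T ⊆ E := by
      intro x hxT
      rw [hE, Finset.mem_union]
      rcases x with ⟨i, j⟩ | (i | g)
      · refine Or.inr (Finset.mem_biUnion.mpr ⟨i, Finset.mem_univ i, hG1 i ?_⟩)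
        exact Finset.mem_inter.mpr ⟨hxT, DLAux.mem_dlGroup.mpr (Or.inr ⟨j, rfl⟩)⟩
      · refine Or.inr (Finset.mem_biUnion.mpr ⟨i, Finset.mem_univ i, hG1 i ?_⟩)
        exact Finset.mem_inter.mpr ⟨hxT, DLAux.mem_dlGroup.mpr (Or.inl rfl)⟩
      · exact Or.inl (by simp [hEg])
    obtain ⟨hErk, hEdist⟩ := hmrc E hEcard (fun i => by rw [hEG i, hG3])
    have hkerE : LinearMap.ker
        ((LinearMap.funLeft F F (Subtype.val : ↥E → DLIdx ℓ r h)).comp C.subtype) = ⊥ := by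
      rw [← Submodule.finrank_eq_zero]
      have hrn := LinearMap.finrank_range_add_finrank_ker
        ((LinearMap.funLeft F F (Subtype.val : ↥E → DLIdx ℓ r h)).comp C.subtype)
      rw [LinearMap.range_comp, Submodule.range_subtype, hdimC, hErk] at hrn
      omega
    -- full rank for big subsets of E
    have hker : ∀ T₁ : Finset (DLIdx ℓ r h), T₁ ⊆ E → ℓ * r ≤ T₁.card →
        dlRho ℓ r h F C T₁ = ℓ * r := by
      intro T₁ hT₁E hT₁c
      have hk : LinearMap.ker
          ((LinearMap.funLeft F F (Subtype.val : ↥T₁ → DLIdx ℓ r h)).comp C.subtype) = ⊥ := by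
        rw [LinearMap.ker_eq_bot']
        intro c hc
        have hcT : ∀ x ∈ T₁, (c : DLIdx ℓ r h → F) x = 0 := fun x hx => congrFun hc ⟨x, hx⟩
        set y : ↥E → F := fun e => (c : DLIdx ℓ r h → F) e.1 with hy
        have hyC : y ∈ C.map (LinearMap.funLeft F F (Subtype.val : ↥E → DLIdx ℓ r h)) :=
          Submodule.mem_map.mpr ⟨c.1, c.2, rfl⟩
        have hy0 : y = 0 := by
          by_contra hy0
          have hd := hEdist y hyC hy0
          have hsupp : hammingNorm y ≤ (E \ T₁).card := by
            apply Finset.card_le_card_of_injOn (fun e : ↥E => e.1)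
            · intro e he
              simp only [Finset.mem_coe, Finset.mem_filter] at he
              rw [Finset.mem_coe, Finset.mem_sdiff]
              exact ⟨e.2, fun hmem => he.2 (hcT e.1 hmem)⟩
            · intro e₁ _ e₂ _ hee
              exact Subtype.ext hee
          rw [Finset.card_sdiff_of_subset hT₁E] at hsupp
          omega
        have hmk : c ∈ LinearMap.ker
            ((LinearMap.funLeft F F (Subtype.val : ↥E → DLIdx ℓ r h)).comp C.subtype) := by
          rw [LinearMap.mem_ker]
          exact hy0
        rw [hkerE, Submodule.mem_bot] at hmk
        exact hmk
      unfold dlRho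
      have hrn := LinearMap.finrank_range_add_finrank_ker
        ((LinearMap.funLeft F F (Subtype.val : ↥T₁ → DLIdx ℓ r h)).comp C.subtype)
      rw [LinearMap.range_comp, Submodule.range_subtype, hk, hdimC] at hrn
      simpa using hrn
    rcases le_or_gt (ℓ * r) T.card with hcase | hcase
    · rw [hker T hTE hcase, min_eq_right hcase]
    · obtain ⟨T', hTT', hT'E, hT'c⟩ :=
        Finset.exists_subsuperset_card_eq hTE hcase.le (by omega)
      have hT'rho := hker T' hT'E (le_of_eq hT'c.symm)
      unfold dlRho at hT'rho
      have htop : C.map (LinearMap.funLeft F F (Subtype.val : ↥T' → DLIdx ℓ r h)) = ⊤ := by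
        apply Submodule.eq_top_of_finrank_eq
        rw [Module.finrank_fintype_fun_eq_card, Fintype.card_coe, hT'c, hT'rho]
      have hval : (Subtype.val : ↥T → DLIdx ℓ r h) =
          (Subtype.val : ↥T' → DLIdx ℓ r h) ∘ (fun t => ⟨t.1, hTT' t.2⟩) := rfl
      unfold dlRho
      have hinj : Function.Injective (fun t : ↥T => (⟨t.1, hTT' t.2⟩ : ↥T')) := by
        intro t₁ t₂ h12
        have h13 := congrArg Subtype.val h12
        exact Subtype.ext h13
      rw [hval, LinearMap.funLeft_comp, Submodule.map_comp, htop, Submodule.map_top,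
        LinearMap.range_eq_top.mpr
          (LinearMap.funLeft_surjective_of_injective F F _ hinj),
        min_eq_left hcase.le, finrank_top F (↥T → F), Module.finrank_fintype_fun_eq_card,
        Fintype.card_coe]
  -- main proof
  intro U
  set B := Finset.univ.filter (fun i : Fin ℓ => dlGroup ℓ r h i ⊆ U) with hB
  have hBmem : ∀ i ∈ B, dlGroup ℓ r h i ⊆ U := fun i hi => (Finset.mem_filter.mp hi).2
  have hinU1 : ∀ i ∈ B, (Sum.inr (Sum.inl i) : DLIdx ℓ r h) ∈ U := fun i hi =>
    hBmem i hi (DLAux.mem_dlGroup.mpr (Or.inl rfl))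
  have hinU2 : ∀ i ∈ B, ∀ j : Fin r, (Sum.inl (i, j) : DLIdx ℓ r h) ∈ U := fun i hi j =>
    hBmem i hi (DLAux.mem_dlGroup.mpr (Or.inr ⟨j, rfl⟩))
  -- upper bound 1 : ρ(U) ≤ ℓr
  have hub1 : dlRho ℓ r h F C U ≤ ℓ * r := by
    unfold dlRho
    calc Module.finrank F (C.map (LinearMap.funLeft F F (Subtype.val : ↥U → DLIdx ℓ r h)))
        ≤ Module.finrank F ↥C := Submodule.finrank_map_le _ _
      _ = ℓ * r := hdimC
  -- upper bound 2 : ρ(U) ≤ |U| - b(U)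
  have hub2 : dlRho ℓ r h F C U ≤ U.card - B.card := by
    set ψ : (↥U → F) →ₗ[F] (↥B → F) :=
      { toFun := fun y i => y ⟨Sum.inr (Sum.inl i.1), hinU1 i.1 i.2⟩ -
          ∑ j : Fin r, a i.1 j * y ⟨Sum.inl (i.1, j), hinU2 i.1 i.2 j⟩
        map_add' := by
          intro y z; funext i
          simp [mul_add, Finset.sum_add_distrib]
          ring
        map_smul' := by
          intro m y; funext i
          simp [mul_sub, Finset.mul_sum, mul_assoc, mul_left_comm] } with hψ
    have hψsurj : Function.Surjective ψ := by
      intro z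
      refine ⟨fun u => (fun x : DLIdx ℓ r h =>
        Sum.rec (fun _ => 0)
          (fun s => Sum.rec (fun i => if hi : i ∈ B then z ⟨i, hi⟩ else 0) (fun _ => 0) s)
          x) u.1, ?_⟩
      funext i
      show (if hi : i.1 ∈ B then z ⟨i.1, hi⟩ else 0) - ∑ j : Fin r, a i.1 j * 0 = z i
      rw [dif_pos i.2]
      simp
    have hsub : C.map (LinearMap.funLeft F F (Subtype.val : ↥U → DLIdx ℓ r h)) ≤
        LinearMap.ker ψ := by
      rintro y ⟨c, hc, rfl⟩
      rw [LinearMap.mem_ker]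
      funext i
      show c (Sum.inr (Sum.inl i.1)) - ∑ j : Fin r, a i.1 j * c (Sum.inl (i.1, j)) = (0 : F)
      rw [hloc c hc i.1]
      exact sub_self _
    have hkψ := LinearMap.finrank_range_add_finrank_ker ψ
    rw [LinearMap.range_eq_top.mpr hψsurj, finrank_top,
      Module.finrank_fintype_fun_eq_card, Module.finrank_fintype_fun_eq_card,
      Fintype.card_coe, Fintype.card_coe] at hkψ
    have hle := Submodule.finrank_mono hsub
    unfold dlRho
    omega
  -- lower bound
  have himg_sub : B.image (fun i => (Sum.inr (Sum.inl i) : DLIdx ℓ r h)) ⊆ U := by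
    intro x hx
    rw [Finset.mem_image] at hx
    obtain ⟨i, hi, rfl⟩ := hx
    exact hinU1 i hi
  set U' := U \ B.image (fun i => (Sum.inr (Sum.inl i) : DLIdx ℓ r h)) with hU'
  have hU'card : U'.card = U.card - B.card := by
    rw [hU', Finset.card_sdiff_of_subset himg_sub,
      Finset.card_image_of_injective _ (fun i j hij => by simpa using hij)]
  have hU'groups : ∀ i, (U' ∩ dlGroup ℓ r h i).card ≤ r := by
    intro i
    by_cases hi : i ∈ B
    · have hx : (Sum.inr (Sum.inl i) : DLIdx ℓ r h) ∉ U' := by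
        rw [hU', Finset.mem_sdiff]
        rintro ⟨-, hni⟩
        exact hni (Finset.mem_image.mpr ⟨i, hi, rfl⟩)
      have hsub2 : U' ∩ dlGroup ℓ r h i ⊆
          (dlGroup ℓ r h i).erase (Sum.inr (Sum.inl i)) := by
        intro x hx'
        rw [Finset.mem_inter] at hx'
        refine Finset.mem_erase.mpr ⟨?_, hx'.2⟩
        rintro rfl
        exact hx hx'.1
      calc (U' ∩ dlGroup ℓ r h i).card ≤ _ := Finset.card_le_card hsub2
        _ ≤ r := by
          rw [Finset.card_erase_of_mem (DLAux.mem_dlGroup.mpr (Or.inl rfl)), DLAux.card_dlGroup]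
          omega
    · have hns : ¬ dlGroup ℓ r h i ⊆ U := by
        intro hcon
        exact hi (Finset.mem_filter.mpr ⟨Finset.mem_univ i, hcon⟩)
      obtain ⟨x, hxg, hxU⟩ := Finset.not_subset.mp hns
      have hsub2 : U' ∩ dlGroup ℓ r h i ⊆ (dlGroup ℓ r h i).erase x := by
        intro x' hx'
        rw [Finset.mem_inter] at hx'
        refine Finset.mem_erase.mpr ⟨?_, hx'.2⟩
        rintro rfl
        exact hxU (Finset.mem_sdiff.mp (hU' ▸ hx'.1)).1
      calc (U' ∩ dlGroup ℓ r h i).card ≤ _ := Finset.card_le_card hsub2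
        _ ≤ r := by rw [Finset.card_erase_of_mem hxg, DLAux.card_dlGroup]; omega
  have hlb : min (U.card - B.card) (ℓ * r) ≤ dlRho ℓ r h F C U := by
    have hkA := keyA U' hU'groups
    rw [hU'card] at hkA
    calc min (U.card - B.card) (ℓ * r) = dlRho ℓ r h F C U' := hkA.symm
      _ ≤ dlRho ℓ r h F C U := DLAux.rho_mono C (hU' ▸ Finset.sdiff_subset)
  exact le_antisymm (le_min hub2 hub1) hlb
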